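/- Let ε be an injective monoid endomorphism of C₊ with ε(0,1) = (n, n+p) for some n, p ≥ 1. Then there exists s ∈ {0,…,p-1} such that ε equals the composition of λ_{p,s} followed by ςⁿ. -/
import Mathlib


def bmul (x y : ℕ × ℕ) : ℕ × ℕ :=
  (x.1 + y.1 - min x.2 y.1, x.2 + y.2 - min x.2 y.1)

abbrev Cplus := {x : ℕ × ℕ // x.1 ≤ x.2}

instance : Mul Cplus :=
  ⟨fun x y => ⟨bmul x.1 y.1, by have hx := x.2; have hy := y.2; simp only [bmul]; omega⟩⟩

instance : One Cplus := ⟨⟨(0, 0), le_refl 0⟩⟩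

theorem Cplus.mul_def (x y : Cplus) : (x * y).1 = bmul x.1 y.1 := rfl

theorem Cplus.one_def : (1 : Cplus).1 = (0, 0) := rfl

instance : Monoid Cplus where
  mul_assoc x y z := Subtype.ext (by
    simp only [Cplus.mul_def, bmul, Prod.ext_iff]; omega)
  one_mul x := Subtype.ext (by
    have := x.2
    simp only [Cplus.mul_def, Cplus.one_def, bmul, Prod.ext_iff]; omega)
  mul_one x := Subtype.ext (by
    have := x.2
    simp only [Cplus.mul_def, Cplus.one_def, bmul, Prod.ext_iff]; omega)

def lam (k : ℕ) : Cplus → Cplus :=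
  fun x => ⟨(k * x.1.1, k * x.1.2), Nat.mul_le_mul_left k x.2⟩

def sig (l m : ℕ) : Cplus → Cplus := fun x =>
  if x.1.1 = x.1.2 then 1 else ⟨(l, l + m * (x.1.2 - x.1.1)), by omega⟩

def lamns (n s : ℕ) : Cplus → Cplus := fun x =>
  if x.1.1 = 0 then ⟨(0, n * x.1.2), Nat.zero_le _⟩
  else ⟨(n * x.1.1 - s, n * x.1.2 - s), by
    have := Nat.mul_le_mul_left n x.2; omega⟩

def vsig : Cplus → Cplus := fun x =>
  if x.1 = (0, 0) then 1 else ⟨(x.1.1 + 1, x.1.2 + 1), by have := x.2; omega⟩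

def bpow (x : ℕ × ℕ) : ℕ → ℕ × ℕ
  | 0 => (0, 0)
  | n + 1 => bmul (bpow x n) x

-- === aux ===
theorem cplus_mk_eq_mk {a b c d : ℕ} {h1 : a ≤ b} {h2 : c ≤ d} :
    (⟨(a, b), h1⟩ : Cplus) = ⟨(c, d), h2⟩ ↔ a = c ∧ b = d := by
  simp [Subtype.ext_iff, Prod.ext_iff]

theorem mk_mul_mk {a b c d : ℕ} {h1 : a ≤ b} {h2 : c ≤ d} :
    (⟨(a, b), h1⟩ : Cplus) * ⟨(c, d), h2⟩
      = ⟨(a + c - min b c, b + d - min b c), by omega⟩ := rfl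

def cee (i : ℕ) : Cplus := ⟨(i, i), le_refl i⟩

def capow (k : ℕ) : Cplus := ⟨(0, k), Nat.zero_le k⟩

theorem cee_def (i : ℕ) : cee i = ⟨(i, i), le_refl i⟩ := rfl

theorem capow_def (k : ℕ) : capow k = ⟨(0, k), Nat.zero_le k⟩ := rfl

theorem vsig_one : vsig 1 = 1 := by simp [vsig, Cplus.one_def]

theorem vsig_iter_one (n : ℕ) : vsig^[n] 1 = 1 :=
  Function.iterate_fixed vsig_one n

theorem vsig_mk (a b : ℕ) (hab : a ≤ b) (h : b ≠ 0) :
    vsig ⟨(a, b), hab⟩ = ⟨(a + 1, b + 1), by omega⟩ := by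
  have hne : ((⟨(a, b), hab⟩ : Cplus)).1 ≠ ((0 : ℕ), (0 : ℕ)) := by
    simp [Prod.ext_iff]; omega
  rw [vsig, if_neg hne]

theorem vsig_iter (n a b : ℕ) (hab : a ≤ b) (h : b ≠ 0) :
    vsig^[n] ⟨(a, b), hab⟩ = ⟨(a + n, b + n), by omega⟩ := by
  induction n generalizing a b with
  | zero => simp
  | succ m ih =>
    rw [Function.iterate_succ_apply, vsig_mk a b hab h,
      ih (a + 1) (b + 1) (by omega) (by omega), cplus_mk_eq_mk]
    omega
/-- An injective monoid endomorphism ε of C₊ with ε(a) = bⁿaⁿ⁺ᵖ equals λ_{p,s}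
followed by ςⁿ for some s ∈ {0,…,p-1}. -/
theorem injective_endo_eq_lamns_vsig (ε : Cplus → Cplus)
    (hmul : ∀ x y : Cplus, ε (x * y) = ε x * ε y) (hone : ε 1 = 1)
    (hinj : Function.Injective ε) (n p : ℕ) (hn : 1 ≤ n) (hp : 1 ≤ p)
    (ha : ε ⟨(0, 1), Nat.zero_le 1⟩ = ⟨(n, n + p), by omega⟩) :
    ∃ s, s < p ∧ ε = vsig^[n] ∘ lamns p s := by
  have hA : ε (capow 1) = ⟨(n, n + p), by omega⟩ := ha
  -- powers of a
  have hpow : ∀ k, 1 ≤ k → ε (capow k) = ⟨(n, n + k * p), by omega⟩ := by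
    intro k hk
    induction k with
    | zero => omega
    | succ m ih =>
      rcases Nat.lt_or_ge m 1 with h1 | h1
      · have hm0 : m = 0 := by omega
        subst hm0
        rw [hA, cplus_mk_eq_mk]
        omega
      · have hsplit : capow (m + 1) = capow m * capow 1 := by
          rw [capow_def, capow_def, capow_def, mk_mul_mk, cplus_mk_eq_mk]
          omega
        rw [hsplit, hmul, ih h1, hA, mk_mul_mk, cplus_mk_eq_mk]
        have e1 : (m + 1) * p = m * p + p := by ring
        omega
  -- idempotents
  have key : ∀ y : Cplus, y * y = y → ∃ m, y = cee m := by
    rintro ⟨⟨u, v⟩, huv⟩ hy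
    rw [mk_mul_mk, cplus_mk_eq_mk] at hy
    refine ⟨u, ?_⟩
    rw [cee_def, cplus_mk_eq_mk]
    omega
  obtain ⟨g, hg⟩ : ∃ g : ℕ → ℕ, ∀ i, ε (cee i) = cee (g i) := by
    have h1 : ∀ i, ∃ m, ε (cee i) = cee m := by
      intro i
      refine key _ ?_
      rw [← hmul]
      congr 1
      rw [cee_def, mk_mul_mk, cplus_mk_eq_mk]
      omega
    exact ⟨fun i => (h1 i).choose, fun i => (h1 i).choose_spec⟩
  have hc0 : cee 0 = 1 := rfl
  have hg0 : g 0 = 0 := by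
    have h1 : cee (g 0) = cee 0 := by rw [← hg 0, hc0]; exact hone
    rw [cee_def, cee_def, cplus_mk_eq_mk] at h1
    omega
  -- key relation
  have hrel : ∀ i,
      n + g (i + 1) - min (n + p) (g (i + 1)) = g i + n - min (g i) n ∧
      n + p + g (i + 1) - min (n + p) (g (i + 1)) = g i + (n + p) - min (g i) n := by
    intro i
    have h1 : capow 1 * cee (i + 1) = cee i * capow 1 := by
      rw [capow_def, cee_def, cee_def, mk_mul_mk, mk_mul_mk, cplus_mk_eq_mk]
      omega
    have h2 := congrArg ε h1
    rw [hmul, hmul, hA, hg, hg, cee_def, cee_def, mk_mul_mk, mk_mul_mk,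
      cplus_mk_eq_mk] at h2
    omega
  -- g i > n for i ≥ 1
  have hgt : ∀ i, 1 ≤ i → n < g i := by
    intro i hi
    by_contra hle
    push_neg at hle
    have h1 : ε (cee i * capow 1) = ε (capow 1) := by
      rw [hmul, hg, hA, cee_def, mk_mul_mk, cplus_mk_eq_mk]
      omega
    have h2 := hinj h1
    rw [cee_def, capow_def, mk_mul_mk, cplus_mk_eq_mk] at h2
    omega
  have hg1 : n < g 1 ∧ g 1 ≤ n + p := by
    have h := hrel 0
    have h2 := hgt 1 le_rfl
    rw [hg0] at h
    simp only [Nat.zero_add] at h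
    omega
  obtain ⟨s, hslt, hgs1⟩ : ∃ s, s < p ∧ g 1 = n + p - s :=
    ⟨n + p - g 1, by omega, by omega⟩
  have hrec : ∀ i, 1 ≤ i → g (i + 1) = g i + p := by
    intro i hi
    have h := hrel i
    have h1 := hgt i hi
    have h2 := hgt (i + 1) (by omega)
    omega
  have hform : ∀ i, g (i + 1) = n + p * (i + 1) - s := by
    intro i
    induction i with
    | zero => rw [hgs1]; simp
    | succ m ih =>
      have h1 := hrec (m + 1) (by omega)
      have h2 : p * (m + 1 + 1) = p * (m + 1) + p := by ring
      have h3 : p ≤ p * (m + 1) := Nat.le_mul_of_pos_right p (by omega)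
      omega
  refine ⟨s, hslt, ?_⟩
  funext x
  obtain ⟨⟨i, j⟩, hij⟩ := x
  have hij' : i ≤ j := hij
  simp only [Function.comp_apply]
  by_cases hi : i = 0
  · subst hi
    rcases Nat.eq_zero_or_pos j with hj | hj
    · subst hj
      have hx1 : (⟨((0 : ℕ), (0 : ℕ)), hij⟩ : Cplus) = 1 := rfl
      rw [hx1, hone]
      have hl : lamns p s 1 = 1 := by
        simp [lamns, Subtype.ext_iff]
        rfl
      rw [hl, vsig_iter_one]
    · have hx2 : (⟨((0 : ℕ), j), hij⟩ : Cplus) = capow j := Subtype.ext rfl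
      rw [hx2, hpow j hj]
      have hl : lamns p s (capow j) = ⟨(0, p * j), Nat.zero_le _⟩ := by
        simp [lamns, capow]
      rw [hl, vsig_iter n 0 (p * j) (Nat.zero_le _) (by positivity),
        cplus_mk_eq_mk]
      have e1 : j * p = p * j := Nat.mul_comm j p
      omega
  · -- i ≥ 1
    have hi1 : 1 ≤ i := by omega
    have hgi : g i = n + p * i - s := by
      have h := hform (i - 1)
      rwa [Nat.sub_add_cancel hi1] at h
    have hpi : p ≤ p * i := Nat.le_mul_of_pos_right p hi1
    have hpj : p * i ≤ p * j := Nat.mul_le_mul_left p hij'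
    have hlam : lamns p s ⟨(i, j), hij⟩ = ⟨(p * i - s, p * j - s), by omega⟩ := by
      simp [lamns, hi]
    rw [hlam, vsig_iter n _ _ _ (by omega)]
    rcases Nat.eq_or_lt_of_le hij' with hji | hji
    · -- j = i
      have hx3 : (⟨(i, j), hij⟩ : Cplus) = cee i := by
        rw [cee_def, cplus_mk_eq_mk]
        exact ⟨rfl, hji.symm⟩
      rw [hx3, hg, cee_def, cplus_mk_eq_mk]
      have e3 : p * j = p * i := by rw [hji]
      omega
    · -- j > i
      have hx4 : (⟨(i, j), hij⟩ : Cplus) = cee i * capow (j - i) := by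
        rw [cee_def, capow_def, mk_mul_mk, cplus_mk_eq_mk]
        omega
      rw [hx4, hmul, hg, hpow (j - i) (by omega), cee_def, mk_mul_mk,
        cplus_mk_eq_mk]
      have e1 : p * i + p * (j - i) = p * j := by
        rw [← Nat.mul_add]; congr 1; omega
      have e2 : (j - i) * p = p * (j - i) := Nat.mul_comm _ _
      omega
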